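/- In the setting of the explicit Shapiro map (Γ profinite, Δ closed, X a smooth abelian Δ-module): the Shapiro map S_Δ^Γ: C^k(Δ, X) → C^k(Γ, Ind_Δ^Γ X) commutes with the differentials on both complexes and is a section of the map C^k(Γ, Ind_Δ^Γ X) → C^k(Δ, X) given by restricting a cochain to Δ^{k+1} and then evaluating values (elements of Ind_Δ^Γ X) at 1 ∈ Γ. -/
import Mathlib


/-- The explicit Shapiro map on homogeneous cochains. -/
def shap {Γ : Type} [Group Γ] {Δ : Subgroup Γ} {X : Type} [AddCommGroup X]
    [DistribMulAction Δ X] (r : Γ → Δ) {k : ℕ}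
    (c : (Fin (k + 1) → Δ) → X) : (Fin (k + 1) → Γ) → Γ → X :=
  fun σ a => r a • c (fun j => (r a)⁻¹ * r (a * σ j))

/-- Differential on homogeneous cochains:
`(∂c)(σ₀,…,σ_{k+1}) = Σ_j (−1)^j c(σ₀,…,σ̂_j,…,σ_{k+1})`. -/
def dd {G V : Type} [AddCommGroup V] {k : ℕ}
    (c : (Fin (k + 1) → G) → V) : (Fin (k + 2) → G) → V :=
  fun σ => ∑ j : Fin (k + 2), ((-1 : ℤ) ^ (j : ℕ)) • c (fun m => σ (j.succAbove m))

/-- the Shapiro map commutes with the differentials and is a section of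
the map given by restriction to `Δ` followed by evaluation at `1 ∈ Γ`. -/
theorem stmt12
    (Γ : Type) [Group Γ] (Δ : Subgroup Γ)
    (X : Type) [AddCommGroup X] [DistribMulAction Δ X]
    (r : Γ → Δ)
    (hreq : ∀ (δ : Δ) (γ : Γ), r ((δ : Γ) * γ) = δ * r γ)
    (hr1 : r 1 = 1)
    (k : ℕ) (c : (Fin (k + 1) → Δ) → X) :
    -- section of restriction-evaluation
    (∀ δs : Fin (k + 1) → Δ, shap r c (fun j => (δs j : Γ)) 1 = c δs) ∧
    -- commutes with the differentials
    (∀ (σ : Fin (k + 2) → Γ) (a : Γ),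
      dd (shap r c) σ a = shap r (dd c) σ a) := by
  have hrδ : ∀ δ : Δ, r (δ : Γ) = δ := by
    intro δ
    have := hreq δ 1
    simpa [hr1] using this
  constructor
  · intro δs
    simp only [shap, one_mul, hr1, hrδ, inv_one, one_smul, one_mul]
  · intro σ a
    simp only [shap, dd, Finset.smul_sum, Finset.sum_apply, Pi.smul_apply]
    refine Finset.sum_congr rfl fun j _ => ?_
    rw [smul_comm]
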